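/- For μ > 0 and v ∈ ℝᵐ, let d = d(v,μ) and x = x(v,μ) be the Newton direction and point. If ‖d‖∞ ≤ 1, then x is feasible for the QP (Ax + b ≥ 0) and its objective value satisfies (1/2)xᵀWx + cᵀx ≤ V* + μ·m, where V* is the optimal value of the QP: minimize (1/2)xᵀWx + cᵀx subject to Ax + b ≥ 0. -/

import Mathlib

open Matrix

/-- Elementwise exponentiation `e^v` of a vector. -/
noncomputable def expV {m : ℕ} (v : Fin m → ℝ) : Fin m → ℝ := fun i => Real.exp (v i)

/-- The log-domain Newton system: `(d, x)` satisfies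
`√μ·Aᵀ(eᵛ + eᵛ∘d) = Wx + c` and `√μ·(e^{−v} − e^{−v}∘d) = Ax + b`. -/
noncomputable def IsNewton {m n : ℕ} (A : Matrix (Fin m) (Fin n) ℝ) (b : Fin m → ℝ)
    (c : Fin n → ℝ) (W : Matrix (Fin n) (Fin n) ℝ) (μ : ℝ) (v d : Fin m → ℝ)
    (x : Fin n → ℝ) : Prop :=
  Real.sqrt μ • (Aᵀ).mulVec (expV v + expV v * d) = W.mulVec x + c ∧
  Real.sqrt μ • (expV (-v) - expV (-v) * d) = A.mulVec x + b

/-- `v` is a centered point for parameter `μ`, witnessed by `x`: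
`√μ·Aᵀeᵛ = Wx + c` and `√μ·e^{−v} = Ax + b`. -/
noncomputable def IsCentered {m n : ℕ} (A : Matrix (Fin m) (Fin n) ℝ) (b : Fin m → ℝ)
    (c : Fin n → ℝ) (W : Matrix (Fin n) (Fin n) ℝ) (μ : ℝ) (v : Fin m → ℝ)
    (x : Fin n → ℝ) : Prop :=
  Real.sqrt μ • (Aᵀ).mulVec (expV v) = W.mulVec x + c ∧
  Real.sqrt μ • expV (-v) = A.mulVec x + b

/-- The divergence `h(u,v) := ⟨eᵘ, e^{−v}⟩ + ⟨e^{−u}, eᵛ⟩ − 2m`. -/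
noncomputable def diverg {m : ℕ} (u v : Fin m → ℝ) : ℝ :=
  (∑ i, Real.exp (u i) * Real.exp (-v i)) + (∑ i, Real.exp (-u i) * Real.exp (v i))
    - 2 * m

/-- The Euclidean norm of a vector in `ℝᵐ`. -/
noncomputable def enorm {m : ℕ} (d : Fin m → ℝ) : ℝ := Real.sqrt (∑ i, d i ^ 2)

/-- for `μ > 0` and `v`, let `(d, x)` be the Newton direction and point.
If `‖d‖∞ ≤ 1` then `x` is feasible (`Ax + b ≥ 0`) and its objective value is within
`μ·m` of the optimal value of the QP `minimize (1/2)xᵀWx + cᵀx s.t. Ax + b ≥ 0`,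
i.e. `(1/2)xᵀWx + cᵀx ≤ (1/2)yᵀWy + cᵀy + μ·m` for every feasible `y`
(here `‖d‖` on `Fin m → ℝ` is the sup norm). -/
theorem stmt_16 {m n : ℕ} (A : Matrix (Fin m) (Fin n) ℝ) (b : Fin m → ℝ) (c : Fin n → ℝ)
    (W : Matrix (Fin n) (Fin n) ℝ) (hW : W.PosSemidef) (hAW : (Aᵀ * A + W).PosDef)
    (μ : ℝ) (hμ : 0 < μ) (v d : Fin m → ℝ) (x : Fin n → ℝ)
    (hd : IsNewton A b c W μ v d x) (hdle : ‖d‖ ≤ 1) :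
    (∀ i, 0 ≤ (A.mulVec x + b) i) ∧
    ∀ y : Fin n → ℝ, (∀ i, 0 ≤ (A.mulVec y + b) i) →
      (1 / 2) * (x ⬝ᵥ W.mulVec x) + c ⬝ᵥ x
        ≤ (1 / 2) * (y ⬝ᵥ W.mulVec y) + c ⬝ᵥ y + μ * m := by
  obtain ⟨h1, h2⟩ := hd
  have hsq : Real.sqrt μ * Real.sqrt μ = μ := Real.mul_self_sqrt hμ.le
  have hsqpos : 0 < Real.sqrt μ := Real.sqrt_pos.mpr hμ
  have hdabs : ∀ i, |d i| ≤ 1 := fun i =>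
    (Real.norm_eq_abs _) ▸ le_trans (norm_le_pi_norm d i) hdle
  have hfeas : ∀ i, 0 ≤ (A.mulVec x + b) i := by
    intro i
    rw [← h2]
    simp only [Pi.smul_apply, Pi.sub_apply, Pi.mul_apply, Pi.neg_apply, smul_eq_mul, expV]
    have h1' : d i ≤ 1 := (abs_le.mp (hdabs i)).2
    have he := Real.exp_pos (-v i)
    have : Real.sqrt μ * (Real.exp (-v i) - Real.exp (-v i) * d i)
        = Real.sqrt μ * Real.exp (-v i) * (1 - d i) := by ring
    rw [this]
    exact mul_nonneg (mul_nonneg hsqpos.le he.le) (by linarith)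
  refine ⟨hfeas, ?_⟩
  intro y hy
  set lam : Fin m → ℝ := Real.sqrt μ • (expV v + expV v * d) with hlam
  have hlag : Aᵀ.mulVec lam = W.mulVec x + c := by
    rw [hlam, Matrix.mulVec_smul]; exact h1
  have hlampos : ∀ i, 0 ≤ lam i := by
    intro i
    have h1' : -1 ≤ d i := (abs_le.mp (hdabs i)).1
    have this2 := Real.exp_pos (v i)
    simp only [hlam, Pi.smul_apply, Pi.add_apply, Pi.mul_apply, smul_eq_mul, expV]
    have : Real.sqrt μ * (Real.exp (v i) + Real.exp (v i) * d i)
        = Real.sqrt μ * Real.exp (v i) * (1 + d i) := by ring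
    rw [this]
    exact mul_nonneg (mul_nonneg hsqpos.le this2.le) (by linarith)
  have hcomp : lam ⬝ᵥ (A.mulVec x + b) ≤ μ * m := by
    rw [← h2]
    have : ∀ i, lam i * (Real.sqrt μ • (expV (-v) - expV (-v) * d)) i ≤ μ := by
      intro i
      simp only [hlam, Pi.smul_apply, Pi.add_apply, Pi.sub_apply, Pi.mul_apply,
        Pi.neg_apply, smul_eq_mul, expV]
      have hexp : Real.exp (v i) * Real.exp (-v i) = 1 := by
        rw [← Real.exp_add]; simp
      have hd2 : 0 ≤ d i ^ 2 := sq_nonneg _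
      have : Real.sqrt μ * (Real.exp (v i) + Real.exp (v i) * d i) *
          (Real.sqrt μ * (Real.exp (-v i) - Real.exp (-v i) * d i)) = μ * (1 - d i ^ 2) := by
        rw [show Real.sqrt μ * (Real.exp (v i) + Real.exp (v i) * d i) *
          (Real.sqrt μ * (Real.exp (-v i) - Real.exp (-v i) * d i)) =
          (Real.sqrt μ * Real.sqrt μ) * (Real.exp (v i) * Real.exp (-v i)) * (1 - d i ^ 2) by ring,
          hsq, hexp]; ring
      rw [this]
      nlinarith
    calc lam ⬝ᵥ (Real.sqrt μ • (expV (-v) - expV (-v) * d))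
        = ∑ i, lam i * (Real.sqrt μ • (expV (-v) - expV (-v) * d)) i := rfl
      _ ≤ ∑ _i : Fin m, μ := Finset.sum_le_sum (fun i _ => this i)
      _ = μ * m := by simp [mul_comm]
  have hyge : 0 ≤ lam ⬝ᵥ (A.mulVec y + b) :=
    Finset.sum_nonneg fun i _ => mul_nonneg (hlampos i) (hy i)
  -- key linear identity
  have hdotA : ∀ z : Fin n → ℝ, lam ⬝ᵥ A.mulVec z = (W.mulVec x + c) ⬝ᵥ z := by
    intro z
    rw [Matrix.dotProduct_mulVec, ← Matrix.mulVec_transpose, hlag]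
  have hWt : Wᵀ = W := (by simpa using hW.1 : W.IsSymm).eq
  have hWsym : ∀ u w : Fin n → ℝ, u ⬝ᵥ W.mulVec w = w ⬝ᵥ W.mulVec u := by
    intro u w
    rw [Matrix.dotProduct_mulVec, ← Matrix.mulVec_transpose, hWt, dotProduct_comm]
  have hcv : 0 ≤ (y - x) ⬝ᵥ W.mulVec (y - x) := by
    have := hW.dotProduct_mulVec_nonneg (y - x)
    simpa using this
  have hexpand : (y - x) ⬝ᵥ W.mulVec (y - x) =
      y ⬝ᵥ W.mulVec y - 2 * (x ⬝ᵥ W.mulVec y) + x ⬝ᵥ W.mulVec x := by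
    rw [Matrix.mulVec_sub, dotProduct_sub, sub_dotProduct,
      sub_dotProduct, hWsym y x]
    ring
  have e1 : lam ⬝ᵥ (A.mulVec y + b) - lam ⬝ᵥ (A.mulVec x + b) =
      (x ⬝ᵥ W.mulVec y + c ⬝ᵥ y) - (x ⬝ᵥ W.mulVec x + c ⬝ᵥ x) := by
    rw [dotProduct_add, dotProduct_add, hdotA, hdotA,
      add_dotProduct, add_dotProduct,
      dotProduct_comm (W.mulVec x) y, hWsym y x,
      dotProduct_comm (W.mulVec x) x]
    ring
  linarith [hexpand ▸ hcv, e1, hcomp, hyge]
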